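/- Let L be a locally compact Hausdorff space and U ⊆ L × L an open extremally antisymmetric set. Then the map f ↦ (the function (x,y) ↦ f(x,y) + f(y,x)) defines a linear isometry from C₀(U) (continuous functions on L × L vanishing at infinity and supported in U) onto the subspace of symmetric functions in C₀(U ∪ Uˢᶜ), where a function g is symmetric if g(x,y) = g(y,x) for all x, y. -/

import Mathlib

open ZeroAtInfty

/-- The functions in `C₀(L × L)` with (closed) support contained in `V`. -/
def suppIn (L : Type*) [TopologicalSpace L] (V : Set (L × L)) :
    Submodule ℝ C₀(L × L, ℝ) where
  carrier := {f | tsupport ⇑f ⊆ V}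
  add_mem' := by
    intro f g hf hg
    have h : tsupport ⇑(f + g) ⊆ tsupport ⇑f ∪ tsupport ⇑g := by
      exact tsupport_add (⇑f) (⇑g)
    exact h.trans (Set.union_subset hf hg)
  zero_mem' := by simp [tsupport]
  smul_mem' := by
    intro c f hf
    have h : tsupport ⇑(c • f) ⊆ tsupport ⇑f := by
      apply closure_mono
      intro x hx
      simp only [ZeroAtInftyContinuousMap.coe_smul, Pi.smul_apply,
        Function.mem_support] at hx ⊢
      intro h0
      exact hx (by simp [h0])
    exact h.trans hf

/-- The symmetric functions in `C₀(L × L)` with support contained in `V`. -/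
def symSuppIn (L : Type*) [TopologicalSpace L] (V : Set (L × L)) :
    Submodule ℝ C₀(L × L, ℝ) where
  carrier := {f | tsupport ⇑f ⊆ V ∧ ∀ x y : L, f (x, y) = f (y, x)}
  add_mem' := by
    intro f g hf hg
    have h : tsupport ⇑(f + g) ⊆ tsupport ⇑f ∪ tsupport ⇑g := by
      exact tsupport_add (⇑f) (⇑g)
    exact ⟨h.trans (Set.union_subset hf.1 hg.1), fun x y => by
      simp [hf.2 x y, hg.2 x y]⟩
  zero_mem' := by simp [tsupport]
  smul_mem' := by
    intro c f hf
    have h : tsupport ⇑(c • f) ⊆ tsupport ⇑f := by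
      apply closure_mono
      intro x hx
      simp only [ZeroAtInftyContinuousMap.coe_smul, Pi.smul_apply,
        Function.mem_support] at hx ⊢
      intro h0
      exact hx (by simp [h0])
    exact ⟨h.trans hf.1, fun x y => by simp [hf.2 x y]⟩

open ZeroAtInftyContinuousMap in
lemma c0_norm_apply_le' {α : Type*} [TopologicalSpace α] (f : C₀(α, ℝ)) (x : α) :
    ‖f x‖ ≤ ‖f‖ := by
  rw [← norm_toBCF_eq_norm]
  exact f.toBCF.norm_coe_le_norm x

open ZeroAtInftyContinuousMap in
lemma c0_norm_le' {α : Type*} [TopologicalSpace α] (f : C₀(α, ℝ)) {C : ℝ} (hC : 0 ≤ C)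
    (h : ∀ x, ‖f x‖ ≤ C) : ‖f‖ ≤ C := by
  rw [← norm_toBCF_eq_norm]
  exact (BoundedContinuousFunction.norm_le hC).2 h

noncomputable def Jlin (L : Type*) [TopologicalSpace L] :
    C₀(L × L, ℝ) →ₗ[ℝ] C₀(L × L, ℝ) :=
  ZeroAtInftyContinuousMap.compLinearMap ((Homeomorph.prodComm L L).toCocompactMap)

@[simp] lemma Jlin_apply {L : Type*} [TopologicalSpace L] (f : C₀(L × L, ℝ)) (p : L × L) :
    Jlin L f p = f p.swap := rfl

set_option maxHeartbeats 2000000 in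
/-- If `U ⊆ L × L` is an open extremally antisymmetric set, then `f ↦ f + Jf`
(with `Jf(x,y) = f(y,x)`) is a linear isometry from `C₀(U)` onto the symmetric
functions in `C₀(U ∪ Uˢᶜ)`. -/
theorem stmt9 {L : Type*} [TopologicalSpace L] [LocallyCompactSpace L] [T2Space L]
    (U : Set (L × L)) (hU : IsOpen U)
    (hanti : ∀ x y : L, (x, y) ∈ U → (y, x) ∉ U) :
    ∃ Φ : suppIn L U ≃ₗᵢ[ℝ] symSuppIn L (U ∪ Prod.swap '' U),
      ∀ (f : suppIn L U) (x y : L),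
        (Φ f : C₀(L × L, ℝ)) (x, y)
          = (f : C₀(L × L, ℝ)) (x, y) + (f : C₀(L × L, ℝ)) (y, x) := by
  classical
  have hswap : ∀ p : L × L, p ∈ U → p.swap ∉ U := fun p hp => hanti p.1 p.2 hp
  have hUsc_open : IsOpen (Prod.swap '' U) := by
    rw [Set.image_swap_eq_preimage_swap]
    exact hU.preimage continuous_swap
  have hdisj : ∀ p : L × L, p ∈ Prod.swap '' U → p ∉ U := by
    rintro p ⟨q, hq, rfl⟩ hp
    exact hswap q hq hp
  have hmemsc : ∀ p : L × L, p ∈ Prod.swap '' U ↔ p.swap ∈ U := by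
    intro p
    constructor
    · rintro ⟨q, hq, rfl⟩; simpa using hq
    · intro h; exact ⟨p.swap, h, by simp⟩
  let J : C₀(L × L, ℝ) →ₗ[ℝ] C₀(L × L, ℝ) := Jlin L
  have hJ : ∀ (f : C₀(L × L, ℝ)) (p : L × L), J f p = f p.swap := fun f p => rfl
  have hJsupp : ∀ f : C₀(L × L, ℝ), tsupport ⇑(J f) = Prod.swap ⁻¹' tsupport ⇑f := by
    intro f
    have h1 : Function.support ⇑(J f) = Prod.swap ⁻¹' Function.support ⇑f := by
      ext p
      simp only [Function.mem_support, Set.mem_preimage, hJ]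
    rw [tsupport, h1, tsupport]
    exact ((Homeomorph.prodComm L L).preimage_closure _).symm
  have hmemT : ∀ f : C₀(L × L, ℝ), tsupport ⇑f ⊆ U →
      (f + J f) ∈ symSuppIn L (U ∪ Prod.swap '' U) := by
    intro f hf
    constructor
    · have h : tsupport ⇑(f + J f) ⊆ tsupport ⇑f ∪ tsupport ⇑(J f) := by
        exact tsupport_add (⇑f) (⇑(J f))
      refine h.trans (Set.union_subset (hf.trans Set.subset_union_left) ?_)
      rw [hJsupp]
      refine Set.Subset.trans ?_ Set.subset_union_right
      intro p hp
      exact (hmemsc p).2 (hf hp)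
    · intro x y
      simp only [ZeroAtInftyContinuousMap.coe_add, Pi.add_apply, hJ]
      exact add_comm _ _
  have hpt : ∀ f : C₀(L × L, ℝ), tsupport ⇑f ⊆ U → ∀ p : L × L, f p ≠ 0 → J f p = 0 := by
    intro f hf p hp
    have hpU : p ∈ U := hf (subset_tsupport _ hp)
    have hns : p.swap ∉ tsupport ⇑f := fun h => hswap p hpU (hf h)
    rw [hJ]
    exact image_eq_zero_of_notMem_tsupport hns
  have hnorm : ∀ f : C₀(L × L, ℝ), tsupport ⇑f ⊆ U → ‖f + J f‖ = ‖f‖ := by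
    intro f hf
    apply le_antisymm
    · apply c0_norm_le' _ (norm_nonneg f)
      intro p
      by_cases hp : f p = 0
      · have h1 : (f + J f) p = J f p := by
          simp [ZeroAtInftyContinuousMap.coe_add, Pi.add_apply, hp]
        rw [h1, hJ]
        exact c0_norm_apply_le' f p.swap
      · have h1 : (f + J f) p = f p := by
          simp [ZeroAtInftyContinuousMap.coe_add, Pi.add_apply, hpt f hf p hp]
        rw [h1]
        exact c0_norm_apply_le' f p
    · apply c0_norm_le' _ (norm_nonneg _)
      intro p
      by_cases hp : f p = 0
      · rw [hp]
        simpa using norm_nonneg (f + J f)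
      · have h1 : (f + J f) p = f p := by
          simp [ZeroAtInftyContinuousMap.coe_add, Pi.add_apply, hpt f hf p hp]
        calc ‖f p‖ = ‖(f + J f) p‖ := by rw [h1]
        _ ≤ ‖f + J f‖ := c0_norm_apply_le' _ p
  let T : suppIn L U →ₗᵢ[ℝ] symSuppIn L (U ∪ Prod.swap '' U) :=
    { toFun := fun f => ⟨(f : C₀(L × L, ℝ)) + J f, hmemT f f.2⟩
      map_add' := fun f g => by
        apply Subtype.ext
        simp only [Submodule.coe_add, map_add]
        abel
      map_smul' := fun c f => by
        apply Subtype.ext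
        simp only [Submodule.coe_smul, map_smul, RingHom.id_apply]
        ext p
        simp [ZeroAtInftyContinuousMap.coe_add, ZeroAtInftyContinuousMap.coe_smul,
          Pi.add_apply, Pi.smul_apply, smul_eq_mul, mul_add]
      norm_map' := fun f => by
        show ‖(f : C₀(L × L, ℝ)) + J f‖ = ‖(f : C₀(L × L, ℝ))‖
        exact hnorm f f.2 }
  have hTapp : ∀ (f : suppIn L U) (p : L × L),
      (T f : C₀(L × L, ℝ)) p = (f : C₀(L × L, ℝ)) p + (f : C₀(L × L, ℝ)) p.swap := by
    intro f p
    show ((f : C₀(L × L, ℝ)) + J (f : C₀(L × L, ℝ))) p = _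
    simp only [ZeroAtInftyContinuousMap.coe_add, Pi.add_apply, hJ]
  have hsurj : Function.Surjective T := by
    rintro ⟨g, hgsupp, hgsym⟩
    set h : L × L → ℝ := fun p => if p ∈ U then g p else 0 with hh
    have hcont : Continuous h := by
      rw [continuous_iff_continuousAt]
      intro p
      by_cases hp : p ∈ U
      · refine g.continuous.continuousAt.congr ?_
        exact Filter.eventuallyEq_of_mem (hU.mem_nhds hp) fun q hq => (if_pos hq).symm
      · have hex : ∃ W : Set (L × L), IsOpen W ∧ p ∈ W ∧ ∀ q ∈ W, h q = 0 := by
          by_cases hp2 : p ∈ Prod.swap '' U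
          · exact ⟨Prod.swap '' U, hUsc_open, hp2, fun q hq => if_neg (hdisj q hq)⟩
          · refine ⟨(tsupport ⇑g)ᶜ, (isClosed_tsupport _).isOpen_compl, ?_, ?_⟩
            · intro hmem
              rcases hgsupp hmem with h1 | h2
              · exact hp h1
              · exact hp2 h2
            · intro q hq
              by_cases hqU : q ∈ U
              · simp [hh, hqU, image_eq_zero_of_notMem_tsupport hq]
              · simp [hh, hqU]
        obtain ⟨W, hWo, hpW, hW0⟩ := hex
        refine (continuousAt_const (y := (0 : ℝ))).congr ?_
        exact Filter.eventuallyEq_of_mem (hWo.mem_nhds hpW) fun q hq => (hW0 q hq).symm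
    have hz : Filter.Tendsto h (Filter.cocompact _) (nhds 0) := by
      have hg0 : Filter.Tendsto (fun p => ‖g p‖) (Filter.cocompact _) (nhds 0) := by
        simpa using (zero_at_infty g).norm
      refine squeeze_zero_norm (fun p => ?_) hg0
      by_cases hp : p ∈ U <;> simp [hh, hp, norm_nonneg]
    let f₀ : C₀(L × L, ℝ) := ⟨⟨h, hcont⟩, hz⟩
    have hcoe : ⇑f₀ = h := rfl
    have hsuppU : Function.support h ⊆ U := by
      intro q hq
      by_contra hqU
      exact hq (if_neg hqU)
    have hsub : Function.support h ⊆ Function.support ⇑g := by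
      intro q hq
      simp only [Function.mem_support] at hq ⊢
      intro h0
      apply hq
      by_cases hqU : q ∈ U <;> simp [hh, hqU, h0]
    have hts : tsupport ⇑f₀ ⊆ U := by
      rw [hcoe]
      intro p hp
      have hpV : p ∈ U ∪ Prod.swap '' U := hgsupp ((closure_mono hsub) hp)
      rcases hpV with h1 | h2
      · exact h1
      · exfalso
        obtain ⟨q, hq1, hq2⟩ := mem_closure_iff.mp hp _ hUsc_open h2
        exact hdisj q hq1 (hsuppU hq2)
    have hsym' : ∀ p : L × L, g p.swap = g p := fun p => hgsym p.2 p.1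
    refine ⟨⟨f₀, hts⟩, ?_⟩
    apply Subtype.ext
    show f₀ + J f₀ = g
    ext p
    simp only [ZeroAtInftyContinuousMap.coe_add, Pi.add_apply, hJ]
    show h p + h p.swap = g p
    by_cases hp : p ∈ U
    · have hps : p.swap ∉ U := hswap p hp
      simp [hh, hp, hps]
    · by_cases hps : p.swap ∈ U
      · have hgg : g p.swap = g p := hsym' p
        simp [hh, hp, hps, hgg]
      · have hpV : p ∉ U ∪ Prod.swap '' U := by
          rintro (h1 | h2)
          · exact hp h1
          · exact hps ((hmemsc p).1 h2)
        have hg0 : g p = 0 :=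
          image_eq_zero_of_notMem_tsupport (fun hmem => hpV (hgsupp hmem))
        simp [hh, hp, hps, hg0]
  refine ⟨LinearIsometryEquiv.ofSurjective (F := suppIn L U) T hsurj, ?_⟩
  intro f x y
  have heq : (LinearIsometryEquiv.ofSurjective T hsurj) f = T f := rfl
  rw [heq]
  exact hTapp f (x, y)
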